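/- For x ≥ 0, x ≠ 1, and t ∈ (0,1), the function f_t(x) := (1/log x)·((1−t)/t·(x^t − 1) + t/(1−t)·x^t(x^(1−t) − 1)) satisfies x^t ≤ f_t(x) ≤ (1/2)(x^t + 1 − t + t·x). -/

import Mathlib

open Set

lemma logA : ∀ v : ℝ, 1 ≤ v → 2 * Real.log v ≤ v - 1/v := by
  intro v hv
  have h0 : (0:ℝ) < 1 := one_pos
  set g : ℝ → ℝ := fun y => y - y⁻¹ - 2 * Real.log y with hg
  have hmono : MonotoneOn g (Ici 1) := by
    apply monotoneOn_of_deriv_nonneg (convex_Ici 1)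
    · apply ContinuousOn.sub (ContinuousOn.sub (continuousOn_id) ?_) ?_
      · exact ContinuousOn.inv₀ continuousOn_id
          (fun y hy => by have : (1:ℝ) ≤ y := hy; positivity)
      · exact ContinuousOn.mul continuousOn_const
          (Real.continuousOn_log.mono (fun y hy => by
            have : (1:ℝ) ≤ y := hy; simp; positivity))
    · rw [interior_Ici]
      intro y hy
      have hy1 : (1:ℝ) < y := hy
      have hy0 : y ≠ 0 := by positivity
      apply DifferentiableAt.differentiableWithinAt
      fun_prop (disch := assumption)
    · rw [interior_Ici]
      intro y hy
      have hy1 : (1:ℝ) < y := hy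
      have hy0 : (0:ℝ) < y := by linarith
      have hd : HasDerivAt g (1 - (-(1/y^2)) - 2 * (1/y)) y := by
        have h1 : HasDerivAt (fun y : ℝ => y) 1 y := hasDerivAt_id y
        have h2 : HasDerivAt (fun y : ℝ => y⁻¹) (-(1/y^2)) y := by
          simpa using (hasDerivAt_inv (ne_of_gt hy0))
        have h3 : HasDerivAt (fun y : ℝ => 2 * Real.log y) (2 * (1/y)) y := by
          simpa using (Real.hasDerivAt_log (ne_of_gt hy0)).const_mul 2
        exact (h1.sub h2).sub h3
      rw [hd.deriv]
      have : 1 - (-(1/y^2)) - 2 * (1/y) = (1 - 1/y)^2 := by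
        field_simp; ring
      rw [this]; positivity
  have := hmono (self_mem_Ici) hv hv
  simp only [hg] at this
  norm_num at this
  rw [one_div]
  linarith

lemma logB : ∀ u : ℝ, 1 ≤ u → 2 * (u - 1) / (u + 1) ≤ Real.log u := by
  intro u hu
  set h : ℝ → ℝ := fun y => Real.log y - 2 + 4 * (y + 1)⁻¹ with hh
  have hmono : MonotoneOn h (Ici 1) := by
    apply monotoneOn_of_deriv_nonneg (convex_Ici 1)
    · apply ContinuousOn.add (ContinuousOn.sub ?_ continuousOn_const) ?_
      · exact Real.continuousOn_log.mono (fun y hy => by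
          have : (1:ℝ) ≤ y := hy; simp; positivity)
      · exact ContinuousOn.mul continuousOn_const (ContinuousOn.inv₀ (by fun_prop)
          (fun y hy => by have : (1:ℝ) ≤ y := hy; positivity))
    · rw [interior_Ici]
      intro y hy
      have hy1 : (1:ℝ) < y := hy
      have hy0 : y ≠ 0 := by positivity
      have hy1' : y + 1 ≠ 0 := by positivity
      apply DifferentiableAt.differentiableWithinAt
      fun_prop (disch := assumption)
    · rw [interior_Ici]
      intro y hy
      have hy1 : (1:ℝ) < y := hy
      have hy0 : (0:ℝ) < y := by linarith
      have hy1' : y + 1 ≠ 0 := by positivity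
      have hd : HasDerivAt h (1/y + 4 * (-1/(y+1)^2)) y := by
        have h1 : HasDerivAt (fun y : ℝ => Real.log y) (1/y) y := by
          simpa using Real.hasDerivAt_log (ne_of_gt hy0)
        have h2 : HasDerivAt (fun y : ℝ => 4 * (y + 1)⁻¹) (4 * (-1/(y+1)^2)) y := by
          have h0 : HasDerivAt (fun y : ℝ => (y + 1)) 1 y := by
            simpa using (hasDerivAt_id y).add_const 1
          simpa using ((h0.inv hy1').const_mul 4)
        exact (h1.sub_const 2).add h2
      rw [hd.deriv]
      have : 1/y + 4 * (-1/(y+1)^2) = (y-1)^2 / (y * (y+1)^2) := by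
        field_simp; ring
      rw [this]; positivity
  have := hmono (self_mem_Ici) hu hu
  simp only [hh] at this
  norm_num at this
  have hu1 : (0:ℝ) < u + 1 := by linarith
  rw [div_le_iff₀ hu1]
  have h2 : (u + 1)⁻¹ * (u+1) = 1 := by field_simp
  nlinarith [this]

lemma logmean_key (c : ℝ) (hc : 0 < c) (hc1 : c ≠ 1) :
    Real.sqrt c ≤ (c - 1) / Real.log c ∧ (c - 1) / Real.log c ≤ (c + 1) / 2 := by
  have hs : 0 < Real.sqrt c := Real.sqrt_pos.2 hc
  have hss : Real.sqrt c * Real.sqrt c = c := Real.mul_self_sqrt hc.le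
  rcases lt_or_gt_of_ne hc1 with hlt | hgt
  · -- c < 1
    have hneg : Real.log c < 0 := Real.log_neg hc hlt
    have hsle : Real.sqrt c ≤ 1 := by
      nlinarith [hss, hs]
    have hs1 : 1 ≤ (Real.sqrt c)⁻¹ := (one_le_inv₀ hs).2 hsle
    constructor
    · rw [le_div_iff_of_neg hneg]
      have hA := logA (Real.sqrt c)⁻¹ hs1
      have hlogi : Real.log (Real.sqrt c)⁻¹ = -(Real.log c / 2) := by
        rw [Real.log_inv, Real.log_sqrt hc.le]
      rw [hlogi] at hA
      have h1 : (1:ℝ) / (Real.sqrt c)⁻¹ = Real.sqrt c := by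
        field_simp
      rw [h1] at hA
      -- hA : 2 * -(log c / 2) ≤ (√c)⁻¹ - √c, i.e. -log c ≤ 1/√c - √c
      have h2 : Real.sqrt c * (Real.sqrt c)⁻¹ = 1 := mul_inv_cancel₀ (ne_of_gt hs)
      nlinarith [hA, hs, hss, h2]
    · rw [div_le_iff_of_neg hneg]
      have hc1' : (1:ℝ) ≤ c⁻¹ := (one_le_inv₀ hc).2 hlt.le
      have hB := logB c⁻¹ hc1'
      rw [Real.log_inv] at hB
      have hcp : (0:ℝ) < c⁻¹ + 1 := by positivity
      rw [div_le_iff₀ hcp] at hB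
      have hcc : c * c⁻¹ = 1 := mul_inv_cancel₀ (ne_of_gt hc)
      nlinarith [hB, hc]
  · -- 1 < c
    have hpos : Real.log c > 0 := Real.log_pos hgt
    have hs1 : 1 ≤ Real.sqrt c := by
      rw [show (1:ℝ) = Real.sqrt 1 by simp]
      exact Real.sqrt_le_sqrt hgt.le
    constructor
    · rw [le_div_iff₀ hpos]
      have hA := logA (Real.sqrt c) hs1
      rw [Real.log_sqrt hc.le] at hA
      -- hA : 2 * (log c / 2) ≤ √c - 1/√c
      have hinv : Real.sqrt c * (1/Real.sqrt c) = 1 := by field_simp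
      nlinarith [hA, hs, hss, hinv]
    · rw [div_le_iff₀ hpos]
      have hB := logB c hgt.le
      have hcp : (0:ℝ) < c + 1 := by linarith
      rw [div_le_iff₀ hcp] at hB
      nlinarith [hB]


/-- The representing function `f_t` of the weighted logarithmic mean satisfies
`x^t ≤ f_t(x) ≤ (1/2)(x^t + 1 - t + t x)`. -/
theorem rep_fun_weighted_log_bounds (x t : ℝ) (hx : 0 ≤ x) (hx1 : x ≠ 1)
    (ht : t ∈ Ioo (0:ℝ) 1) :
    x ^ t ≤
      (1 / Real.log x) *
        ((1 - t) / t * (x ^ t - 1) + t / (1 - t) * (x ^ t * (x ^ (1 - t) - 1))) ∧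
    (1 / Real.log x) *
        ((1 - t) / t * (x ^ t - 1) + t / (1 - t) * (x ^ t * (x ^ (1 - t) - 1))) ≤
      (1/2 : ℝ) * (x ^ t + 1 - t + t * x) := by
  obtain ⟨ht0, ht1⟩ := ht
  have ht0' : t ≠ 0 := ne_of_gt ht0
  have ht1' : (1:ℝ) - t ≠ 0 := by intro h; apply absurd ht1; linarith [sub_eq_zero.1 h]
  rcases eq_or_lt_of_le hx with h0 | hx0
  · -- x = 0
    rw [← h0]
    rw [Real.zero_rpow ht0', Real.log_zero]
    norm_num
    linarith
  · -- x > 0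
    have hL : Real.log x ≠ 0 := by
      intro h
      rcases Real.log_eq_zero.1 h with h | h | h
      · exact absurd h (ne_of_gt hx0)
      · exact hx1 h
      · linarith
    have hc : (0:ℝ) < x ^ t := Real.rpow_pos_of_pos hx0 t
    have hd : (0:ℝ) < x ^ (1 - t) := Real.rpow_pos_of_pos hx0 (1 - t)
    have hlogc : Real.log (x ^ t) = t * Real.log x := Real.log_rpow hx0 t
    have hlogd : Real.log (x ^ (1 - t)) = (1 - t) * Real.log x := Real.log_rpow hx0 (1 - t)
    have hcd : x ^ t * x ^ (1 - t) = x := by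
      rw [← Real.rpow_add hx0]; norm_num
    have hc1 : x ^ t ≠ 1 := by
      intro h
      have := hlogc
      rw [h, Real.log_one] at this
      exact hL (by rcases mul_eq_zero.1 this.symm with h | h; exact absurd h ht0'; exact h)
    have hd1 : x ^ (1 - t) ≠ 1 := by
      intro h
      have := hlogd
      rw [h, Real.log_one] at this
      exact hL (by rcases mul_eq_zero.1 this.symm with h | h; exact absurd h ht1'; exact h)
    obtain ⟨k1c, k2c⟩ := logmean_key (x ^ t) hc hc1
    obtain ⟨k1d, k2d⟩ := logmean_key (x ^ (1 - t)) hd hd1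
    have hE : (1 / Real.log x) *
        ((1 - t) / t * (x ^ t - 1) + t / (1 - t) * (x ^ t * (x ^ (1 - t) - 1))) =
        (1 - t) * ((x ^ t - 1) / Real.log (x ^ t)) +
        t * (x ^ t * ((x ^ (1 - t) - 1) / Real.log (x ^ (1 - t)))) := by
      rw [hlogc, hlogd]
      field_simp
    rw [hE]
    constructor
    · -- lower bound
      have hsc : Real.sqrt (x ^ t) = x ^ (t / 2) := by
        rw [Real.sqrt_eq_rpow, ← Real.rpow_mul hx]
        ring_nf
      have hsd : Real.sqrt (x ^ (1 - t)) = x ^ ((1 - t) / 2) := by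
        rw [Real.sqrt_eq_rpow, ← Real.rpow_mul hx]
        ring_nf
      have hgm : x ^ t ≤ (1 - t) * Real.sqrt (x ^ t) +
          t * (x ^ t * Real.sqrt (x ^ (1 - t))) := by
        have h := Real.geom_mean_le_arith_mean2_weighted
          (by linarith : (0:ℝ) ≤ 1 - t) ht0.le
          (Real.sqrt_nonneg (x ^ t))
          (by positivity : (0:ℝ) ≤ x ^ t * Real.sqrt (x ^ (1 - t)))
          (by ring : (1 - t) + t = 1)
        refine le_trans (le_of_eq ?_) h
        rw [hsc, hsd, ← Real.rpow_add hx0, ← Real.rpow_mul hx, ← Real.rpow_mul hx,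
          ← Real.rpow_add hx0]
        congr 1
        ring
      have h1 : (1 - t) * Real.sqrt (x ^ t) ≤ (1 - t) * ((x ^ t - 1) / Real.log (x ^ t)) :=
        mul_le_mul_of_nonneg_left k1c (by linarith)
      have h2 : t * (x ^ t * Real.sqrt (x ^ (1 - t))) ≤
          t * (x ^ t * ((x ^ (1 - t) - 1) / Real.log (x ^ (1 - t)))) :=
        mul_le_mul_of_nonneg_left (mul_le_mul_of_nonneg_left k1d hc.le) ht0.le
      linarith
    · -- upper bound
      have h1 : (1 - t) * ((x ^ t - 1) / Real.log (x ^ t)) ≤ (1 - t) * ((x ^ t + 1) / 2) :=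
        mul_le_mul_of_nonneg_left k2c (by linarith)
      have h2 : t * (x ^ t * ((x ^ (1 - t) - 1) / Real.log (x ^ (1 - t)))) ≤
          t * (x ^ t * ((x ^ (1 - t) + 1) / 2)) :=
        mul_le_mul_of_nonneg_left (mul_le_mul_of_nonneg_left k2d hc.le) ht0.le
      have heq : (1 - t) * ((x ^ t + 1) / 2) + t * (x ^ t * ((x ^ (1 - t) + 1) / 2)) =
          (1/2 : ℝ) * (x ^ t + 1 - t + t * x) := by
        linear_combination (t/2) * hcd
      linarith
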